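/- Let π : (X̃,μ̃,𝓡̃) → (X,μ,𝓡) be a class-bijective extension of discrete p.m.p. equivalence relations, and let 𝓕 = {𝓕_r} be a Borel family of finite subset functions for 𝓡. Define the lifted family 𝓕̃_r(x̃) = π⁻¹(𝓕_r(π(x̃))) ∩ [x̃]. Then for each property P ∈ {asymptotically invariant, uniform, regular, tempered}: if 𝓕 has property P then 𝓕̃ has property P (with the same constants). -/

import Mathlib

open MeasureTheory Filter Finset

section Props

variable {Y : Type*} [MeasurableSpace Y] [DecidableEq Y]

/-- A family of subset functions is asymptotically invariant (Følner). -/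
def AsympInvariant (μ : Measure Y) (R : Y → Y → Prop) (F : ℕ → Y → Finset Y) : Prop :=
  (∀ᵐ x ∂μ, ∀ r, 1 ≤ (F r x).card) ∧
  ∃ Ψ : Set (Equiv.Perm Y), Ψ.Countable ∧ (∀ ψ ∈ Ψ, ∀ x, R x (ψ x)) ∧
    (∀ᵐ x ∂μ, ∀ y, R x y → ∃ ψ ∈ Subgroup.closure Ψ, ψ x = y) ∧
    ∀ ψ ∈ Ψ, ∀ᵐ x ∂μ, Tendsto
      (fun r => ((symmDiff (F r x) ((F r x).image ψ)).card : ℝ) / (F r x).card)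
      atTop (nhds 0)

/-- A family of subset functions is uniform with constants `C_u, a_r, b_r`. -/
def UniformFam (μ : Measure Y) (F : ℕ → Y → Finset Y) : Prop :=
  ∃ (Cu : ℝ) (a b : ℕ → ℝ), 0 < Cu ∧ (∀ r, 0 < a r ∧ b r ≤ Cu * a r) ∧
    ∀ᵐ x ∂μ, ∀ r,
      (a r ≤ (F r x).card ∧ ((F r x).card : ℝ) ≤ b r) ∧
      (a r ≤ ({y | x ∈ F r y}.ncard : ℝ) ∧ ({y | x ∈ F r y}.ncard : ℝ) ≤ b r)

/-- A family of subset functions is regular with constant `C_reg`. -/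
def RegularFam (μ : Measure Y) (F : ℕ → Y → Finset Y) : Prop :=
  ∃ Creg : ℝ, 0 < Creg ∧ ∀ᵐ x ∂μ, ∀ r : ℕ,
    (({x' | ∃ t ≤ r, ((F t x') ∩ (F r x)).Nonempty}).ncard : ℝ) ≤ Creg * (F r x).card

/-- A family of subset functions is tempered with constant `C_t`. -/
def TemperedFam (μ : Measure Y) (F : ℕ → Y → Finset Y) : Prop :=
  ∃ Ct : ℝ, 0 < Ct ∧ ∀ᵐ x ∂μ, ∀ r : ℕ,
    (({x' | ∃ t < r, ((F t x') ∩ (F r x)).Nonempty}).ncard : ℝ) ≤ Ct * (F r x).card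

end Props


section Lift

variable {X Xt : Type*}

def GoodSet (R : X → X → Prop) (Rt : Xt → Xt → Prop) (π : Xt → X) : Set Xt :=
  {x | (∀ y z, Rt x y → Rt x z → π y = π z → y = z) ∧
       (∀ w, R (π x) w → ∃ y, Rt x y ∧ π y = w)}

variable {R : X → X → Prop} {Rt : Xt → Xt → Prop} {π : Xt → X}

lemma good_rel (hR : Equivalence R) (hRt : Equivalence Rt)
    (hπR : ∀ x y, Rt x y → R (π x) (π y))
    {x y : Xt} (hx : x ∈ GoodSet R Rt π) (hxy : Rt x y) : y ∈ GoodSet R Rt π := by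
  constructor
  · intro a b ha hb hab
    exact hx.1 a b (hRt.trans hxy ha) (hRt.trans hxy hb) hab
  · intro w hw
    obtain ⟨z, hz, hz'⟩ := hx.2 w (hR.trans (hπR x y hxy) hw)
    exact ⟨z, hRt.trans (hRt.symm hxy) hz, hz'⟩

open Classical in
noncomputable def liftFun (R : X → X → Prop) (Rt : Xt → Xt → Prop) (π : Xt → X)
    (ψ : X → X) (x : Xt) : Xt :=
  if h : x ∈ GoodSet R Rt π ∧ R (π x) (ψ (π x)) then (h.1.2 (ψ (π x)) h.2).choose else x

lemma liftFun_spec {ψ : X → X} {x : Xt} (hx : x ∈ GoodSet R Rt π)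
    (hψ : R (π x) (ψ (π x))) :
    Rt x (liftFun R Rt π ψ x) ∧ π (liftFun R Rt π ψ x) = ψ (π x) := by
  unfold liftFun
  rw [dif_pos ⟨hx, hψ⟩]
  exact (hx.2 (ψ (π x)) hψ).choose_spec

lemma liftFun_not_mem {ψ : X → X} {x : Xt} (hx : x ∉ GoodSet R Rt π) :
    liftFun R Rt π ψ x = x := by
  unfold liftFun
  rw [dif_neg (fun h : _ ∧ _ => hx h.1)]

lemma liftFun_leftInv (hR : Equivalence R) (hRt : Equivalence Rt)
    (hπR : ∀ x y, Rt x y → R (π x) (π y))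
    {ψ φ : X → X} (hψ : ∀ a, R a (ψ a)) (hφ : ∀ a, R a (φ a))
    (hcomp : ∀ a, φ (ψ a) = a) (x : Xt) :
    liftFun R Rt π φ (liftFun R Rt π ψ x) = x := by
  by_cases hx : x ∈ GoodSet R Rt π
  · obtain ⟨h1, h2⟩ := liftFun_spec hx (hψ (π x))
    set y := liftFun R Rt π ψ x with hy
    have hyG : y ∈ GoodSet R Rt π := good_rel hR hRt hπR hx h1
    obtain ⟨h3, h4⟩ := liftFun_spec hyG (hφ (π y))
    refine hyG.1 _ _ h3 (hRt.symm h1) ?_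
    rw [h4, h2, hcomp]
  · rw [liftFun_not_mem hx, liftFun_not_mem hx]

noncomputable def liftPerm (hR : Equivalence R) (hRt : Equivalence Rt)
    (hπR : ∀ x y, Rt x y → R (π x) (π y))
    (ψ : Equiv.Perm X) (hψ : ∀ a, R a (ψ a)) : Equiv.Perm Xt where
  toFun := liftFun R Rt π ψ
  invFun := liftFun R Rt π ψ.symm
  left_inv := liftFun_leftInv hR hRt hπR hψ
    (fun a => hR.symm (by simpa using hψ (ψ.symm a))) (fun a => ψ.symm_apply_apply a)
  right_inv := liftFun_leftInv hR hRt hπR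
    (fun a => hR.symm (by simpa using hψ (ψ.symm a))) hψ (fun a => ψ.apply_symm_apply a)

lemma liftPerm_spec (hR : Equivalence R) (hRt : Equivalence Rt)
    (hπR : ∀ x y, Rt x y → R (π x) (π y))
    (ψ : Equiv.Perm X) (hψ : ∀ a, R a (ψ a)) {x : Xt} (hx : x ∈ GoodSet R Rt π) :
    Rt x (liftPerm hR hRt hπR ψ hψ x) ∧ π (liftPerm hR hRt hπR ψ hψ x) = ψ (π x) :=
  liftFun_spec (ψ := ⇑ψ) hx (hψ (π x))

lemma liftPerm_not_mem (hR : Equivalence R) (hRt : Equivalence Rt)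
    (hπR : ∀ x y, Rt x y → R (π x) (π y))
    (ψ : Equiv.Perm X) (hψ : ∀ a, R a (ψ a)) {x : Xt} (hx : x ∉ GoodSet R Rt π) :
    liftPerm hR hRt hπR ψ hψ x = x :=
  liftFun_not_mem (ψ := ⇑ψ) hx

lemma liftPerm_rel (hR : Equivalence R) (hRt : Equivalence Rt)
    (hπR : ∀ x y, Rt x y → R (π x) (π y))
    (ψ : Equiv.Perm X) (hψ : ∀ a, R a (ψ a)) (x : Xt) :
    Rt x (liftPerm hR hRt hπR ψ hψ x) := by
  by_cases hx : x ∈ GoodSet R Rt π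
  · exact (liftPerm_spec hR hRt hπR ψ hψ hx).1
  · rw [liftPerm_not_mem hR hRt hπR ψ hψ hx]; exact hRt.refl x

lemma image_sdiff_of_injOn {α β : Type*} [DecidableEq α] [DecidableEq β] {f : α → β}
    {A B : Finset α} (h : Set.InjOn f (A ∪ B : Finset α)) :
    (A \ B).image f = A.image f \ B.image f := by
  ext w
  simp only [Finset.mem_image, Finset.mem_sdiff]
  constructor
  · rintro ⟨a, ⟨haA, haB⟩, rfl⟩
    refine ⟨⟨a, haA, rfl⟩, ?_⟩
    rintro ⟨b, hbB, hba⟩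
    exact haB (h (by simp [hbB]) (by simp [haA]) hba ▸ hbB)
  · rintro ⟨⟨a, haA, rfl⟩, hnB⟩
    exact ⟨a, ⟨haA, fun haB => hnB ⟨a, haB, rfl⟩⟩, rfl⟩

lemma perm_apply_inv_self {α : Type*} (f : Equiv.Perm α) (x : α) : f (f⁻¹ x) = x :=
  Equiv.apply_symm_apply f x

lemma perm_inv_apply_self {α : Type*} (f : Equiv.Perm α) (x : α) : f⁻¹ (f x) = x :=
  Equiv.symm_apply_apply f x

end Lift

/-- (Bowen–Nevo, §2.6): each of the properties asymptotically invariant, uniform, regular,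
tempered lifts through a class-bijective extension of discrete p.m.p. equivalence relations. -/
theorem lift_properties {X Xt : Type*} [MeasurableSpace X] [MeasurableSpace Xt]
    [DecidableEq X] [DecidableEq Xt]
    (μ : Measure X) [IsProbabilityMeasure μ] (μt : Measure Xt) [IsProbabilityMeasure μt]
    (R : X → X → Prop) (hR : Equivalence R) (hcount : ∀ x, {y | R x y}.Countable)
    (Rt : Xt → Xt → Prop) (hRt : Equivalence Rt) (hcountt : ∀ x, {y | Rt x y}.Countable)
    (hpres : ∀ ψ : Equiv.Perm X, (∀ x, R x (ψ x)) → Measurable (ψ : X → X) →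
      Measurable (ψ.symm : X → X) → MeasurePreserving ψ μ μ)
    (hprest : ∀ ψ : Equiv.Perm Xt, (∀ x, Rt x (ψ x)) → Measurable (ψ : Xt → Xt) →
      Measurable (ψ.symm : Xt → Xt) → MeasurePreserving ψ μt μt)
    (π : Xt → X) (hπm : Measurable π) (hπp : MeasurePreserving π μt μ)
    (hπR : ∀ x y, Rt x y → R (π x) (π y))
    (hbij : ∀ᵐ x ∂μt,
      (∀ y z, Rt x y → Rt x z → π y = π z → y = z) ∧
      (∀ w, R (π x) w → ∃ y, Rt x y ∧ π y = w))
    (F : ℕ → X → Finset X) (hFR : ∀ r x, ∀ y ∈ F r x, R x y)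
    (Ft : ℕ → Xt → Finset Xt)
    (hFt : ∀ r x y, y ∈ Ft r x ↔ (Rt x y ∧ π y ∈ F r (π x))) :
    (AsympInvariant μ R F → AsympInvariant μt Rt Ft) ∧
    (UniformFam μ F → UniformFam μt Ft) ∧
    (RegularFam μ F → RegularFam μt Ft) ∧
    (TemperedFam μ F → TemperedFam μt Ft) := by
  have hG : ∀ᵐ x ∂μt, x ∈ GoodSet R Rt π := hbij
  have pull : ∀ {p : X → Prop}, (∀ᵐ x ∂μ, p x) → ∀ᵐ x ∂μt, p (π x) :=
    fun h => hπp.quasiMeasurePreserving.ae h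
  have hGrel : ∀ {x y : Xt}, x ∈ GoodSet R Rt π → Rt x y → y ∈ GoodSet R Rt π :=
    fun hx hxy => good_rel hR hRt hπR hx hxy
  have himage : ∀ x ∈ GoodSet R Rt π, ∀ r, (Ft r x).image π = F r (π x) := by
    intro x hx r
    ext w
    simp only [Finset.mem_image]
    constructor
    · rintro ⟨y, hy, rfl⟩; exact ((hFt r x y).1 hy).2
    · intro hw
      obtain ⟨y, hy, rfl⟩ := hx.2 w (hFR r (π x) w hw)
      exact ⟨y, (hFt r x y).2 ⟨hy, hw⟩, rfl⟩
  have hinjFt : ∀ x ∈ GoodSet R Rt π, ∀ r, Set.InjOn π (Ft r x : Set Xt) :=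
    fun x hx r a ha b hb hab =>
      hx.1 a b ((hFt r x a).1 ha).1 ((hFt r x b).1 hb).1 hab
  have hcard : ∀ x ∈ GoodSet R Rt π, ∀ r, (Ft r x).card = (F r (π x)).card := by
    intro x hx r
    rw [← himage x hx r, Finset.card_image_of_injOn (hinjFt x hx r)]
  -- transfer of the "intersecting sets" ncard, used for regular and tempered
  have hSet : ∀ x ∈ GoodSet R Rt π, ∀ (Q : ℕ → Prop) (r : ℕ),
      {x' : Xt | ∃ t, Q t ∧ (Ft t x' ∩ Ft r x).Nonempty}.ncard
        = {x' : X | ∃ t, Q t ∧ (F t x' ∩ F r (π x)).Nonempty}.ncard := by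
    intro x hx Q r
    have himg : π '' {x' : Xt | ∃ t, Q t ∧ (Ft t x' ∩ Ft r x).Nonempty}
        = {x' : X | ∃ t, Q t ∧ (F t x' ∩ F r (π x)).Nonempty} := by
      ext w
      constructor
      · rintro ⟨y, ⟨t, hQ, z, hz⟩, rfl⟩
        rw [Finset.mem_inter] at hz
        exact ⟨t, hQ, π z, Finset.mem_inter.2
          ⟨((hFt t y z).1 hz.1).2, ((hFt r x z).1 hz.2).2⟩⟩
      · rintro ⟨t, hQ, w', hw'⟩
        rw [Finset.mem_inter] at hw'
        obtain ⟨z, hz, rfl⟩ := hx.2 w' (hFR r (π x) w' hw'.2)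
        have hzG : z ∈ GoodSet R Rt π := hGrel hx hz
        obtain ⟨y, hy, rfl⟩ := hzG.2 w (hR.symm (hFR t w (π z) hw'.1))
        exact ⟨y, ⟨t, hQ, z, Finset.mem_inter.2
          ⟨(hFt t y z).2 ⟨hRt.symm hy, hw'.1⟩, (hFt r x z).2 ⟨hz, hw'.2⟩⟩⟩, rfl⟩
    have hinj : Set.InjOn π {x' : Xt | ∃ t, Q t ∧ (Ft t x' ∩ Ft r x).Nonempty} := by
      rintro y ⟨t, _, z, hz⟩ y' ⟨t', _, z', hz'⟩ h
      rw [Finset.mem_inter] at hz hz'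
      have h1 : Rt x y := hRt.trans ((hFt r x z).1 hz.2).1 (hRt.symm ((hFt t y z).1 hz.1).1)
      have h2 : Rt x y' := hRt.trans ((hFt r x z').1 hz'.2).1 (hRt.symm ((hFt t' y' z').1 hz'.1).1)
      exact hx.1 y y' h1 h2 h
    rw [← himg, Set.ncard_image_of_injOn hinj]
  refine ⟨?_, ?_, ?_, ?_⟩
  · -- asymptotically invariant
    rintro ⟨hne, Ψ, hΨc, hΨcl, hΨgen, hΨfol⟩
    constructor
    · filter_upwards [hG, pull hne] with x hx h1 r
      rw [hcard x hx r]; exact h1 r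
    have hcnt : Countable {ψ : Equiv.Perm X // ψ ∈ Ψ} := hΨc.to_subtype
    refine ⟨Set.range (fun p : {ψ : Equiv.Perm X // ψ ∈ Ψ} =>
        liftPerm hR hRt hπR p.1 (hΨcl p.1 p.2)), Set.countable_range _, ?_, ?_, ?_⟩
    · rintro τ ⟨⟨ψ, hψ⟩, rfl⟩ x
      exact liftPerm_rel hR hRt hπR ψ (hΨcl ψ hψ) x
    · -- generation
      have key : ∀ σ ∈ Subgroup.closure Ψ, (∀ a, R a (σ a)) ∧
          ∃ τ ∈ Subgroup.closure (Set.range (fun p : {ψ : Equiv.Perm X // ψ ∈ Ψ} =>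
              liftPerm hR hRt hπR p.1 (hΨcl p.1 p.2))),
            (∀ x ∉ GoodSet R Rt π, τ x = x) ∧
            ∀ x ∈ GoodSet R Rt π, Rt x (τ x) ∧ π (τ x) = σ (π x) := by
        intro σ hσ
        induction hσ using Subgroup.closure_induction with
        | mem ψ hψ =>
          refine ⟨hΨcl ψ hψ, liftPerm hR hRt hπR ψ (hΨcl ψ hψ),
            Subgroup.subset_closure ⟨⟨ψ, hψ⟩, rfl⟩, ?_, ?_⟩
          · intro x hx; exact liftPerm_not_mem hR hRt hπR ψ (hΨcl ψ hψ) hx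
          · intro x hx; exact liftPerm_spec hR hRt hπR ψ (hΨcl ψ hψ) hx
        | one =>
          exact ⟨fun a => hR.refl a, 1, one_mem _, fun x _ => rfl,
            fun x _ => ⟨hRt.refl x, rfl⟩⟩
        | mul ψ φ hψm hφm ihψ ihφ =>
          obtain ⟨hclψ, τ, hτm, hτoff, hτon⟩ := ihψ
          obtain ⟨hclφ, τ', hτ'm, hτ'off, hτ'on⟩ := ihφ
          refine ⟨fun a => hR.trans (hclφ a) (hclψ (φ a)), τ * τ', mul_mem hτm hτ'm, ?_, ?_⟩
          · intro x hx
            show τ (τ' x) = x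
            rw [hτ'off x hx, hτoff x hx]
          · intro x hx
            obtain ⟨h1, h2⟩ := hτ'on x hx
            have hx' : τ' x ∈ GoodSet R Rt π := hGrel hx h1
            obtain ⟨h3, h4⟩ := hτon _ hx'
            refine ⟨hRt.trans h1 h3, ?_⟩
            show π (τ (τ' x)) = ψ (φ (π x))
            rw [h4, h2]
        | inv ψ hψm ihψ =>
          obtain ⟨hclψ, τ, hτm, hτoff, hτon⟩ := ihψ
          have hcli : ∀ a, R a (ψ⁻¹ a) := fun a => hR.symm (by
            have := hclψ (ψ⁻¹ a)
            rwa [perm_apply_inv_self] at this)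
          refine ⟨hcli, τ⁻¹, inv_mem hτm, ?_, ?_⟩
          · intro x hx
            by_cases hy : τ⁻¹ x ∈ GoodSet R Rt π
            · exfalso
              have h1 := hτon _ hy
              have h2 : τ (τ⁻¹ x) ∈ GoodSet R Rt π := hGrel hy h1.1
              rw [perm_apply_inv_self] at h2
              exact hx h2
            · have h3 := hτoff _ hy
              rw [perm_apply_inv_self] at h3
              exact h3.symm
          · intro x hx
            have hy : τ⁻¹ x ∈ GoodSet R Rt π := by
              by_contra hy
              have h2 : x = τ⁻¹ x := by
                have h3 := hτoff _ hy
                rw [perm_apply_inv_self] at h3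
                exact h3
              exact hy (h2 ▸ hx)
            obtain ⟨h1, h2⟩ := hτon _ hy
            rw [perm_apply_inv_self] at h1 h2
            refine ⟨hRt.symm h1, ?_⟩
            show π (τ⁻¹ x) = ψ⁻¹ (π x)
            rw [h2, perm_inv_apply_self]
      filter_upwards [hG, pull hΨgen] with x hx hgen y hxy
      obtain ⟨σ, hσ, hσx⟩ := hgen (π y) (hπR x y hxy)
      obtain ⟨-, τ, hτm, -, hτon⟩ := key σ hσ
      obtain ⟨h1, h2⟩ := hτon x hx
      exact ⟨τ, hτm, hx.1 _ _ h1 hxy (by rw [h2, hσx])⟩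
    · -- Følner
      rintro τ ⟨⟨ψ, hψ⟩, rfl⟩
      filter_upwards [hG, pull (hΨfol ψ hψ)] with x hx hfol
      have heq : ∀ r : ℕ,
          ((symmDiff (F r (π x)) ((F r (π x)).image ψ)).card : ℝ) / (F r (π x)).card
          = ((symmDiff (Ft r x)
              ((Ft r x).image (liftPerm hR hRt hπR ψ (hΨcl ψ hψ)))).card : ℝ) / (Ft r x).card := by
        intro r
        have hsub : ∀ y ∈ Ft r x ∪ (Ft r x).image (liftPerm hR hRt hπR ψ (hΨcl ψ hψ)),
            Rt x y := by
          intro y hy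
          rcases Finset.mem_union.1 hy with h | h
          · exact ((hFt r x y).1 h).1
          · obtain ⟨a, ha, rfl⟩ := Finset.mem_image.1 h
            exact hRt.trans ((hFt r x a).1 ha).1 (liftPerm_rel hR hRt hπR ψ (hΨcl ψ hψ) a)
        have hinjU : Set.InjOn π
            ((Ft r x ∪ (Ft r x).image (liftPerm hR hRt hπR ψ (hΨcl ψ hψ)) : Finset Xt) : Set Xt) := by
          intro u hu v hv huv
          exact hx.1 u v (hsub u (by exact_mod_cast hu)) (hsub v (by exact_mod_cast hv)) huv
        have hinjU' : Set.InjOn π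
            (((Ft r x).image (liftPerm hR hRt hπR ψ (hΨcl ψ hψ)) ∪ Ft r x : Finset Xt) : Set Xt) := by
          rw [Finset.union_comm]; exact hinjU
        have hA : (Ft r x).image π = F r (π x) := himage x hx r
        have hB : ((Ft r x).image (liftPerm hR hRt hπR ψ (hΨcl ψ hψ))).image π
            = (F r (π x)).image ψ := by
          rw [Finset.image_image, ← hA, Finset.image_image]
          apply Finset.image_congr
          intro a ha
          have haG : a ∈ GoodSet R Rt π := hGrel hx ((hFt r x a).1 ha).1
          exact (liftPerm_spec hR hRt hπR ψ (hΨcl ψ hψ) haG).2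
        have hsd : (symmDiff (Ft r x) ((Ft r x).image (liftPerm hR hRt hπR ψ (hΨcl ψ hψ)))).image π
            = symmDiff (F r (π x)) ((F r (π x)).image ψ) := by
          rw [symmDiff_def, symmDiff_def, Finset.sup_eq_union, Finset.sup_eq_union,
            Finset.image_union, _root_.image_sdiff_of_injOn hinjU, _root_.image_sdiff_of_injOn hinjU',
            hA, hB]
        have hssub : symmDiff (Ft r x) ((Ft r x).image (liftPerm hR hRt hπR ψ (hΨcl ψ hψ)))
            ⊆ Ft r x ∪ (Ft r x).image (liftPerm hR hRt hπR ψ (hΨcl ψ hψ)) := by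
          intro y hy
          rw [Finset.mem_union]
          rcases Finset.mem_symmDiff.1 hy with ⟨h, -⟩ | ⟨h, -⟩
          · exact Or.inl h
          · exact Or.inr h
        have hcsd : (symmDiff (F r (π x)) ((F r (π x)).image ψ)).card
            = (symmDiff (Ft r x) ((Ft r x).image (liftPerm hR hRt hπR ψ (hΨcl ψ hψ)))).card := by
          rw [← hsd, Finset.card_image_of_injOn (hinjU.mono (Finset.coe_subset.2 hssub))]
        rw [hcsd, hcard x hx r]
      exact Tendsto.congr heq hfol
  · -- uniform
    rintro ⟨Cu, a, b, hCu, hab, hae⟩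
    refine ⟨Cu, a, b, hCu, hab, ?_⟩
    filter_upwards [hG, pull hae] with x hx hx' r
    have hc := hcard x hx r
    have hnc : {y | x ∈ Ft r y}.ncard = {w | π x ∈ F r w}.ncard := by
      have himg : π '' {y | x ∈ Ft r y} = {w | π x ∈ F r w} := by
        ext w
        constructor
        · rintro ⟨y, hy, rfl⟩; exact ((hFt r y x).1 hy).2
        · intro hw
          obtain ⟨y, hy, rfl⟩ := hx.2 w (hR.symm (hFR r w (π x) hw))
          exact ⟨y, (hFt r y x).2 ⟨hRt.symm hy, hw⟩, rfl⟩
      have hinj : Set.InjOn π {y | x ∈ Ft r y} := fun y hy y' hy' h =>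
        hx.1 y y' (hRt.symm ((hFt r y x).1 hy).1) (hRt.symm ((hFt r y' x).1 hy').1) h
      rw [← himg, Set.ncard_image_of_injOn hinj]
    rw [hc, hnc]
    exact hx' r
  · -- regular
    rintro ⟨Creg, hC, hae⟩
    refine ⟨Creg, hC, ?_⟩
    filter_upwards [hG, pull hae] with x hx hx' r
    rw [hSet x hx (fun t => t ≤ r) r, hcard x hx r]
    exact hx' r
  · -- tempered
    rintro ⟨Ct, hC, hae⟩
    refine ⟨Ct, hC, ?_⟩
    filter_upwards [hG, pull hae] with x hx hx' r
    rw [hSet x hx (fun t => t < r) r, hcard x hx r]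
    exact hx' r
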